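/- (Case 2) Let y₀ ∈ ℝ³, y₀ ≠ 0. Then J⁻¹(0,0) ∩ M_{G²(y₀)} = {(λy₀, βy₀, 0, 0) : λ,β ∈ ℝ, λ ≠ β} ∪ {(λy₀, βy₀, γy₀, −γy₀) : λ,β,γ ∈ ℝ, γ ≠ 0}, and this set is path-connected. -/

import Mathlib

open Matrix

/-- Vectors in ℝ³. -/
abbrev V3 : Type := Fin 3 → ℝ

/-- The two-body phase space M = ℝ³ × ℝ³ × ℝ³ × ℝ³, points (q¹, q², p¹, p²). -/
abbrev M2B : Type := V3 × V3 × V3 × V3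

/-- A 3×3 real matrix is special orthogonal. -/
def SO3 (A : Matrix (Fin 3) (Fin 3) ℝ) : Prop := Aᵀ * A = 1 ∧ A.det = 1

/-- The action of (A, a) ∈ SE(3) on the phase space:
(A,a)·(q¹,q²,p¹,p²) = (Aq¹+a, Aq²+a, Ap¹, Ap²). -/
def act (A : Matrix (Fin 3) (Fin 3) ℝ) (a : V3) (m : M2B) : M2B :=
  (A *ᵥ m.1 + a, A *ᵥ m.2.1 + a, A *ᵥ m.2.2.1, A *ᵥ m.2.2.2)

/-- The isotropy subgroup SE(3)_{(q,p)} of a point of M, as a set of pairs (A,a)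
with A special orthogonal. -/
def isotropy (m : M2B) : Set (Matrix (Fin 3) (Fin 3) ℝ × V3) :=
  {g | SO3 g.1 ∧ act g.1 g.2 m = m}

/-- The momentum map J(q¹,q²,p¹,p²) = (q¹×p¹ + q²×p², p¹+p²). -/
def Jmom (m : M2B) : V3 × V3 :=
  (m.1 ⨯₃ m.2.2.1 + m.2.1 ⨯₃ m.2.2.2, m.2.2.1 + m.2.2.2)

/-- G¹(x) = {(A,a) ∈ SE(3) : a = x − Ax}. -/
def G1 (x : V3) : Set (Matrix (Fin 3) (Fin 3) ℝ × V3) :=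
  {g | SO3 g.1 ∧ g.2 = x - g.1 *ᵥ x}

/-- G²(y) = {(A,0) ∈ SE(3) : Ay = y}. -/
def G2 (y : V3) : Set (Matrix (Fin 3) (Fin 3) ℝ × V3) :=
  {g | SO3 g.1 ∧ g.1 *ᵥ y = y ∧ g.2 = 0}

/-- G³(x,y) = {(A,a) ∈ SE(3) : Ay = y and a = x − Ax}. -/
def G3 (x y : V3) : Set (Matrix (Fin 3) (Fin 3) ℝ × V3) :=
  {g | SO3 g.1 ∧ g.1 *ᵥ y = y ∧ g.2 = x - g.1 *ᵥ x}

/-- G⁴ = {(I, 0)}, the trivial subgroup. -/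
def G4 : Set (Matrix (Fin 3) (Fin 3) ℝ × V3) := {((1 : Matrix (Fin 3) (Fin 3) ℝ), (0 : V3))}


/- ### Auxiliary lemmas -/

private lemma dot_self_ne (y : V3) (hy : y ≠ 0) : y ⬝ᵥ y ≠ 0 := by
  simpa only [Ne, dotProduct_self_eq_zero] using hy

private lemma vmv_mulVec (u v w : V3) : vecMulVec u v *ᵥ w = (v ⬝ᵥ w) • u := by
  funext i
  simp [vecMulVec_apply, mulVec, dotProduct, Fin.sum_univ_three]
  ring

private lemma vmv_mul_vmv (u v u' v' : V3) :
    vecMulVec u v * vecMulVec u' v' = (v ⬝ᵥ u') • vecMulVec u v' := by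
  ext i j
  simp [Matrix.mul_apply, vecMulVec_apply, dotProduct, Fin.sum_univ_three, Matrix.smul_apply]
  ring

private lemma vmv_transpose (u v : V3) : (vecMulVec u v)ᵀ = vecMulVec v u := by
  ext i j; simp [vecMulVec_apply, mul_comm]

private lemma det_smul_vmv_sub_one (c : ℝ) (u v : V3) :
    (c • vecMulVec u v - 1).det = c * (u ⬝ᵥ v) - 1 := by
  simp [Matrix.det_fin_three, Matrix.sub_apply, Matrix.smul_apply, vecMulVec_apply,
    Matrix.one_apply, dotProduct, Fin.sum_univ_three]
  ring

/-- Rotation by π about the axis `y`. -/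
noncomputable def rotPi (y : V3) : Matrix (Fin 3) (Fin 3) ℝ :=
  (2 / (y ⬝ᵥ y)) • vecMulVec y y - 1

private lemma rotPi_so3 (y : V3) (hy : y ≠ 0) : SO3 (rotPi y) := by
  have hd := dot_self_ne y hy
  have hT : (rotPi y)ᵀ = rotPi y := by
    unfold rotPi
    rw [Matrix.transpose_sub, Matrix.transpose_smul, vmv_transpose, Matrix.transpose_one]
  constructor
  · rw [hT]
    unfold rotPi
    rw [sub_mul, mul_sub, mul_sub, Matrix.smul_mul, Matrix.mul_smul,
      vmv_mul_vmv, smul_smul, smul_smul]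
    simp only [one_mul, mul_one]
    set d : ℝ := y ⬝ᵥ y with hdd
    have h2 : 2 / d * (2 / d) * d = 2 / d + 2 / d := by field_simp; ring
    rw [h2, add_smul]
    abel
  · unfold rotPi
    rw [det_smul_vmv_sub_one, div_mul_cancel₀ _ hd]
    norm_num

private lemma rotPi_fix_y (y : V3) (hy : y ≠ 0) : rotPi y *ᵥ y = y := by
  have hd := dot_self_ne y hy
  unfold rotPi
  rw [Matrix.sub_mulVec, Matrix.smul_mulVec, vmv_mulVec, Matrix.one_mulVec, smul_smul,
    div_mul_cancel₀ _ hd, two_smul]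
  abel

private lemma rotPi_fixed (y v : V3) (hy : y ≠ 0) (h : rotPi y *ᵥ v = v) :
    ∃ t : ℝ, v = t • y := by
  have hd := dot_self_ne y hy
  unfold rotPi at h
  rw [Matrix.sub_mulVec, Matrix.smul_mulVec, vmv_mulVec, Matrix.one_mulVec,
    smul_smul, sub_eq_iff_eq_add] at h
  refine ⟨2⁻¹ * (2 / (y ⬝ᵥ y) * (y ⬝ᵥ v)), ?_⟩
  have h2 := congrArg (fun w : V3 => (2⁻¹ : ℝ) • w) h
  simp only [smul_smul, smul_add] at h2
  rw [h2]
  funext i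
  simp
  ring

private lemma so3_diag1 : SO3 (diagonal ![(1:ℝ), -1, -1]) := by
  constructor
  · rw [Matrix.diagonal_transpose]
    ext i j
    fin_cases i <;> fin_cases j <;>
      norm_num [Matrix.mul_apply, Fin.sum_univ_three, Matrix.diagonal_apply, Matrix.one_apply]
  · rw [Matrix.det_diagonal, Fin.prod_univ_three]; norm_num [Matrix.cons_val_two]

private lemma so3_diag2 : SO3 (diagonal ![(-1:ℝ), 1, -1]) := by
  constructor
  · rw [Matrix.diagonal_transpose]
    ext i j
    fin_cases i <;> fin_cases j <;>
      norm_num [Matrix.mul_apply, Fin.sum_univ_three, Matrix.diagonal_apply, Matrix.one_apply]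
  · rw [Matrix.det_diagonal, Fin.prod_univ_three]; norm_num [Matrix.cons_val_two]

/-- There is a rotation not fixing any given nonzero vector. -/
private lemma exists_so3_not_fix (y : V3) (hy : y ≠ 0) :
    ∃ D : Matrix (Fin 3) (Fin 3) ℝ, SO3 D ∧ D *ᵥ y ≠ y := by
  by_cases h12 : y 1 = 0 ∧ y 2 = 0
  · have h0 : y 0 ≠ 0 := by
      intro h0
      apply hy
      funext i; fin_cases i
      · exact h0
      · exact h12.1
      · exact h12.2
    refine ⟨diagonal ![(-1:ℝ), 1, -1], so3_diag2, ?_⟩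
    intro h
    have := congrFun h 0
    rw [Matrix.mulVec_diagonal] at this
    simp at this
    exact h0 (by linarith)
  · rcases not_and_or.mp h12 with h1 | h2
    · refine ⟨diagonal ![(1:ℝ), -1, -1], so3_diag1, ?_⟩
      intro h
      have := congrFun h 1
      rw [Matrix.mulVec_diagonal] at this
      simp at this
      exact h1 (by linarith)
    · refine ⟨diagonal ![(1:ℝ), -1, -1], so3_diag1, ?_⟩
      intro h
      have := congrFun h 2
      rw [Matrix.mulVec_diagonal] at this
      simp at this
      exact h2 (by linarith)

private lemma cross_smul_smul (y : V3) (s t : ℝ) : (s • y) ⨯₃ (t • y) = 0 := by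
  show crossProduct (s • y) (t • y) = 0
  rw [LinearMap.map_smul crossProduct s y, LinearMap.smul_apply, LinearMap.map_smul,
    cross_self, smul_zero, smul_zero]

private lemma seg_join {s : Set (ℝ × ℝ × ℝ)} {x y : ℝ × ℝ × ℝ}
    (h : ∀ a b : ℝ, 0 ≤ a → 0 ≤ b → a + b = 1 → a • x + b • y ∈ s) : JoinedIn s x y := by
  apply JoinedIn.of_segment_subset
  rintro z ⟨a, b, ha, hb, hab, rfl⟩
  exact h a b ha hb hab

private lemma pc_T :
    IsPathConnected {p : ℝ × ℝ × ℝ | p.2.2 ≠ 0 ∨ p.1 ≠ p.2.1} := by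
  set T : Set (ℝ × ℝ × ℝ) := {p | p.2.2 ≠ 0 ∨ p.1 ≠ p.2.1} with hT
  have hbase : ((1, 0, 1) : ℝ × ℝ × ℝ) ∈ T := Or.inl one_ne_zero
  have key : ∀ l b c : ℝ, c ≠ 0 → JoinedIn T (l, b, c) (1, 0, 1) := by
    intro l b c hc
    have j1 : JoinedIn T (l, b, c) (l, l - 1, c) := by
      apply seg_join
      intro a b' ha hb' hab
      left
      show a * c + b' * c ≠ 0
      have : a * c + b' * c = c := by linear_combination c * hab
      rw [this]; exact hc
    have j2 : JoinedIn T (l, l - 1, c) (l, l - 1, 1) := by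
      apply seg_join
      intro a b' ha hb' hab
      right
      show a * l + b' * l ≠ a * (l - 1) + b' * (l - 1)
      intro h
      have : (0 : ℝ) = 1 := by linear_combination hab - h
      exact absurd this (by norm_num)
    have j3 : JoinedIn T (l, l - 1, 1) (1, 0, 1) := by
      apply seg_join
      intro a b' ha hb' hab
      left
      show a * 1 + b' * 1 ≠ 0
      intro h
      have : (0 : ℝ) = 1 := by linear_combination hab - h
      exact absurd this (by norm_num)
    exact (j1.trans j2).trans j3
  have key' : ∀ p ∈ T, JoinedIn T p (1, 0, 1) := by
    rintro ⟨l, b, c⟩ hp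
    by_cases hc : c = 0
    · subst hc
      have hlb : l ≠ b := hp.resolve_left (by simp)
      have j0 : JoinedIn T (l, b, 0) (l, b, 1) := by
        apply seg_join
        intro a b' ha hb' hab
        right
        show a * l + b' * l ≠ a * b + b' * b
        intro h
        exact hlb (by linear_combination h - (l - b) * hab)
      exact j0.trans (key l b 1 one_ne_zero)
    · exact key l b c hc
  exact ⟨(1, 0, 1), hbase, fun _ hq => (key' _ hq).symm⟩

/-- Case 2: J⁻¹(0,0) ∩ M_{G²(y₀)} equals the stated union and is path-connected. -/
theorem stmt8 (y0 : V3) (hy : y0 ≠ 0) :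
    {m : M2B | Jmom m = (0, 0) ∧ isotropy m = G2 y0} =
      ({m : M2B | ∃ l b : ℝ, l ≠ b ∧ m = (l • y0, b • y0, 0, 0)} ∪
       {m : M2B | ∃ l b c : ℝ, c ≠ 0 ∧ m = (l • y0, b • y0, c • y0, -(c • y0))}) ∧
    IsPathConnected {m : M2B | Jmom m = (0, 0) ∧ isotropy m = G2 y0} := by
  have hEq : {m : M2B | Jmom m = (0, 0) ∧ isotropy m = G2 y0} =
      ({m : M2B | ∃ l b : ℝ, l ≠ b ∧ m = (l • y0, b • y0, 0, 0)} ∪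
       {m : M2B | ∃ l b c : ℝ, c ≠ 0 ∧ m = (l • y0, b • y0, c • y0, -(c • y0))}) := by
    ext m
    simp only [Set.mem_setOf_eq, Set.mem_union]
    constructor
    · rintro ⟨hJ, hI⟩
      have hmem : ((rotPi y0, (0 : V3)) : Matrix (Fin 3) (Fin 3) ℝ × V3) ∈ isotropy m := by
        rw [hI]; exact ⟨rotPi_so3 y0 hy, rotPi_fix_y y0 hy, rfl⟩
      obtain ⟨-, hact⟩ := hmem
      have h1 := congrArg (fun x : M2B => x.1) hact
      have h2 := congrArg (fun x : M2B => x.2.1) hact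
      have h3 := congrArg (fun x : M2B => x.2.2.1) hact
      have h4 := congrArg (fun x : M2B => x.2.2.2) hact
      simp only [act, add_zero] at h1 h2 h3 h4
      obtain ⟨l, hl⟩ := rotPi_fixed y0 m.1 hy h1
      obtain ⟨b, hb⟩ := rotPi_fixed y0 m.2.1 hy h2
      obtain ⟨c, hc⟩ := rotPi_fixed y0 m.2.2.1 hy h3
      obtain ⟨e, he⟩ := rotPi_fixed y0 m.2.2.2 hy h4
      simp only [Jmom, Prod.mk.injEq] at hJ
      have hec : e = -c := by
        have hsum : (c + e) • y0 = 0 := by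
          rw [add_smul, ← hc, ← he]; exact hJ.2
        rcases smul_eq_zero.mp hsum with h | h
        · linarith
        · exact absurd h hy
      by_cases hc0 : c = 0
      · by_cases hlb : l = b
        · exfalso
          obtain ⟨D, hDso, hDy⟩ := exists_so3_not_fix y0 hy
          have e1 : m.2.1 = m.1 := by rw [hb, hl, hlb]
          have e2 : m.2.2.1 = 0 := by rw [hc, hc0, zero_smul]
          have e3 : m.2.2.2 = 0 := by rw [he, hec, hc0, neg_zero, zero_smul]
          have hmem2 : ((D, m.1 - D *ᵥ m.1) : Matrix (Fin 3) (Fin 3) ℝ × V3)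
              ∈ isotropy m := by
            refine ⟨hDso, ?_⟩
            show (D *ᵥ m.1 + (m.1 - D *ᵥ m.1), D *ᵥ m.2.1 + (m.1 - D *ᵥ m.1),
              D *ᵥ m.2.2.1, D *ᵥ m.2.2.2) = m
            rw [e1, e2, e3, Matrix.mulVec_zero]
            refine Prod.ext ?_ (Prod.ext ?_ (Prod.ext ?_ ?_))
            · show D *ᵥ m.1 + (m.1 - D *ᵥ m.1) = m.1; abel
            · show D *ᵥ m.1 + (m.1 - D *ᵥ m.1) = m.2.1; rw [e1]; abel
            · show (0 : V3) = m.2.2.1; rw [e2]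
            · show (0 : V3) = m.2.2.2; rw [e3]
          rw [hI] at hmem2
          exact hDy hmem2.2.1
        · left
          refine ⟨l, b, hlb, ?_⟩
          refine Prod.ext hl (Prod.ext hb (Prod.ext ?_ ?_))
          · show m.2.2.1 = 0; rw [hc, hc0, zero_smul]
          · show m.2.2.2 = 0; rw [he, hec, hc0, neg_zero, zero_smul]
      · right
        refine ⟨l, b, c, hc0, ?_⟩
        refine Prod.ext hl (Prod.ext hb (Prod.ext hc ?_))
        show m.2.2.2 = -(c • y0)
        rw [he, hec, neg_smul]
    · rintro (⟨l, b, hlb, rfl⟩ | ⟨l, b, c, hc, rfl⟩)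
      · constructor
        · simp [Jmom]
        · ext g
          obtain ⟨A, a⟩ := g
          simp only [isotropy, G2, Set.mem_setOf_eq, act, Prod.mk.injEq, Matrix.mulVec_zero]
          constructor
          · rintro ⟨hA, h1, h2, -, -⟩
            rw [Matrix.mulVec_smul] at h1 h2
            have h3 : (l - b) • (A *ᵥ y0) = (l - b) • y0 := by
              have hd := congrArg₂ (fun u v : V3 => u - v) h1 h2
              simp only [add_sub_add_right_eq_sub] at hd
              rw [sub_smul, sub_smul]
              exact hd
            have hAy : A *ᵥ y0 = y0 :=
              smul_right_injective V3 (sub_ne_zero.mpr hlb) h3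
            refine ⟨hA, hAy, ?_⟩
            rw [hAy] at h1
            exact add_left_cancel (h1.trans (add_zero (l • y0)).symm)
          · rintro ⟨hA, hAy, rfl⟩
            refine ⟨hA, ?_, ?_, trivial⟩ <;> rw [Matrix.mulVec_smul, hAy, add_zero]
      · constructor
        · simp only [Jmom, Prod.mk.injEq]
          refine ⟨?_, add_neg_cancel _⟩
          have h2 : (b • y0) ⨯₃ (-(c • y0)) = -((b • y0) ⨯₃ (c • y0)) :=
            LinearMap.map_neg _ _
          rw [h2, cross_smul_smul, cross_smul_smul, neg_zero, add_zero]
        · ext g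
          obtain ⟨A, a⟩ := g
          simp only [isotropy, G2, Set.mem_setOf_eq, act, Prod.mk.injEq]
          constructor
          · rintro ⟨hA, h1, -, h3, -⟩
            rw [Matrix.mulVec_smul] at h1 h3
            have hAy : A *ᵥ y0 = y0 := smul_right_injective V3 hc h3
            refine ⟨hA, hAy, ?_⟩
            rw [hAy] at h1
            exact add_left_cancel (h1.trans (add_zero (l • y0)).symm)
          · rintro ⟨hA, hAy, rfl⟩
            rw [Matrix.mulVec_smul, Matrix.mulVec_smul, Matrix.mulVec_smul, hAy]
            refine ⟨hA, by rw [add_zero], by rw [add_zero], rfl, ?_⟩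
            rw [Matrix.mulVec_neg, Matrix.mulVec_smul, hAy]
  refine ⟨hEq, ?_⟩
  rw [hEq]
  have hcont : Continuous
      (fun p : ℝ × ℝ × ℝ => ((p.1 • y0, p.2.1 • y0, p.2.2 • y0, -(p.2.2 • y0)) : M2B)) := by
    fun_prop
  have himg : ({m : M2B | ∃ l b : ℝ, l ≠ b ∧ m = (l • y0, b • y0, 0, 0)} ∪
       {m : M2B | ∃ l b c : ℝ, c ≠ 0 ∧ m = (l • y0, b • y0, c • y0, -(c • y0))}) =
      (fun p : ℝ × ℝ × ℝ => ((p.1 • y0, p.2.1 • y0, p.2.2 • y0, -(p.2.2 • y0)) : M2B)) ''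
        {p : ℝ × ℝ × ℝ | p.2.2 ≠ 0 ∨ p.1 ≠ p.2.1} := by
    ext m
    simp only [Set.mem_union, Set.mem_setOf_eq, Set.mem_image, Prod.exists]
    constructor
    · rintro (⟨l, b, hlb, rfl⟩ | ⟨l, b, c, hc, rfl⟩)
      · exact ⟨l, b, 0, Or.inr hlb, by simp⟩
      · exact ⟨l, b, c, Or.inl hc, rfl⟩
    · rintro ⟨l, b, c, hmem, rfl⟩
      by_cases hc : c = 0
      · subst hc
        left
        exact ⟨l, b, hmem.resolve_left (by simp), by simp⟩
      · right; exact ⟨l, b, c, hc, rfl⟩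
  rw [himg]
  exact pc_T.image hcont
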